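/- Let f₀ be a continuous log-concave probability density on ℝ with decreasing score function ψ₀ (a choice of subderivative of log f₀ on the support, extended by ±∞ outside), let h > 0, let K be the triangular kernel, and let f_h := K_h * f₀ with score ψ_h := f_h'/f_h. Then for all x ∈ ℝ, ψ_h(x+h) ≤ ψ₀(x) ≤ ψ_h(x−h). -/

import Mathlib

open MeasureTheory Real

/-- The triangular kernel `K(x) = (1 − |x|)𝟙{|x| ≤ 1}`. -/
noncomputable def triKernel (x : ℝ) : ℝ := if |x| ≤ 1 then 1 - |x| else 0

/-- The rescaled triangular kernel `K_h = h⁻¹ K(·/h)`. -/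
noncomputable def triKernelH (h x : ℝ) : ℝ := h⁻¹ * triKernel (x / h)

/-- The weak derivative of `K_h`: `K_h'(x) = −h⁻² sgn(x) 𝟙{|x| < h}`. -/
noncomputable def triKernelH' (h x : ℝ) : ℝ := if |x| < h then -(Real.sign x) / h ^ 2 else 0

/-- Convolution `(φ * f)(x) := ∫ φ(x − y) f(y) dy`. -/
noncomputable def conv (φ f : ℝ → ℝ) (x : ℝ) : ℝ := ∫ y, φ (x - y) * f y

/-! ### Auxiliary lemmas -/

lemma myIntervalIntegrable_congr_Ioo {F G : ℝ → ℝ} {a b : ℝ} (hab : a ≤ b)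
    (hFG : ∀ y ∈ Set.Ioo a b, F y = G y)
    (hG : IntervalIntegrable G volume a b) :
    IntervalIntegrable F volume a b := by
  rw [intervalIntegrable_iff_integrableOn_Ioo_of_le hab] at hG ⊢
  exact hG.congr_fun (fun y hy => (hFG y hy).symm) measurableSet_Ioo

lemma myIntervalIntegral_congr_Ioo {F G : ℝ → ℝ} {a b : ℝ} (hab : a ≤ b)
    (hFG : ∀ y ∈ Set.Ioo a b, F y = G y) :
    ∫ y in a..b, F y = ∫ y in a..b, G y := by
  rw [intervalIntegral.integral_of_le hab, intervalIntegral.integral_of_le hab,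
    integral_Ioc_eq_integral_Ioo, integral_Ioc_eq_integral_Ioo]
  exact setIntegral_congr_fun measurableSet_Ioo hFG

lemma conv_triH'_eq (h : ℝ) (hh : 0 < h) (f : ℝ → ℝ) (z : ℝ) :
    conv (triKernelH' h) f z = ∫ y in (z - h)..(z + h), (-Real.sign (z - y) / h ^ 2) * f y := by
  unfold conv
  have key : (fun y => triKernelH' h (z - y) * f y) =
      Set.indicator (Set.Ioo (z - h) (z + h)) (fun y => (-Real.sign (z - y) / h ^ 2) * f y) := by
    funext y
    rw [Set.indicator_apply]
    unfold triKernelH'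
    by_cases hy : y ∈ Set.Ioo (z - h) (z + h)
    · rw [if_pos hy, if_pos (by rw [abs_lt]; constructor <;> [linarith [hy.2]; linarith [hy.1]])]
    · rw [if_neg hy, if_neg, zero_mul]
      intro habs
      rw [abs_lt] at habs
      exact hy ⟨by linarith [habs.2], by linarith [habs.1]⟩
  rw [key, integral_indicator measurableSet_Ioo,
    intervalIntegral.integral_of_le (by linarith), integral_Ioc_eq_integral_Ioo]

lemma conv_triH_eq (h : ℝ) (hh : 0 < h) (f : ℝ → ℝ) (z : ℝ) :
    conv (triKernelH h) f z = ∫ y in (z - h)..(z + h), (h⁻¹ * (1 - |z - y| / h)) * f y := by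
  unfold conv
  have key : (fun y => triKernelH h (z - y) * f y) =
      Set.indicator (Set.Icc (z - h) (z + h)) (fun y => (h⁻¹ * (1 - |z - y| / h)) * f y) := by
    funext y
    rw [Set.indicator_apply]
    unfold triKernelH triKernel
    have habs : |(z - y) / h| ≤ 1 ↔ y ∈ Set.Icc (z - h) (z + h) := by
      rw [abs_div, abs_of_pos hh, div_le_one hh, abs_le]
      constructor
      · rintro ⟨h1, h2⟩; exact ⟨by linarith, by linarith⟩
      · rintro ⟨h1, h2⟩; exact ⟨by simp at h1 ⊢; linarith, by simp at h2 ⊢; linarith⟩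
    by_cases hy : y ∈ Set.Icc (z - h) (z + h)
    · rw [if_pos hy, if_pos (habs.mpr hy), abs_div, abs_of_pos hh]
    · rw [if_neg hy, if_neg (fun hc => hy (habs.mp hc)), mul_zero, zero_mul]
  rw [key, integral_indicator measurableSet_Icc,
    intervalIntegral.integral_of_le (by linarith), integral_Icc_eq_integral_Ioc]

lemma conv_triH_pos (h : ℝ) (hh : 0 < h) (f : ℝ → ℝ) (hf : Continuous f)
    (hf0 : ∀ y, 0 ≤ f y) (z v : ℝ) (hv1 : z - h < v) (hv2 : v < z + h) (hfv : 0 < f v) :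
    0 < conv (triKernelH h) f z := by
  rw [conv_triH_eq h hh f z]
  apply intervalIntegral.integral_pos (by linarith)
  · apply Continuous.continuousOn
    have : Continuous fun y => |z - y| := (continuous_const.sub continuous_id).abs
    continuity
  · intro y hy
    apply mul_nonneg _ (hf0 y)
    apply mul_nonneg (by positivity)
    rw [sub_nonneg, div_le_one hh, abs_le]
    exact ⟨by linarith [hy.2], by linarith [hy.1]⟩
  · refine ⟨v, ⟨by linarith, by linarith⟩, ?_⟩
    apply mul_pos _ hfv
    apply mul_pos (by positivity)
    rw [sub_pos, div_lt_one hh, abs_lt]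
    exact ⟨by linarith, by linarith⟩


lemma prod_sign₁ {u v e : ℝ} (hu : 0 ≤ u) (hv : 0 ≤ v) (he : 0 ≤ e) : 0 ≤ u * (v * e) :=
  mul_nonneg hu (mul_nonneg hv he)

lemma prod_sign₂ {u v e : ℝ} (hu : u ≤ 0) (hv : v ≤ 0) (he : 0 ≤ e) : 0 ≤ u * (v * e) := by
  nlinarith [mul_nonneg (neg_nonneg.mpr hu) (mul_nonneg (neg_nonneg.mpr hv) he)]

set_option maxHeartbeats 1000000 in
lemma core (h c x : ℝ) (hh : 0 < h) (f : ℝ → ℝ) (hf : Continuous f) (hf0 : ∀ y, 0 ≤ f y)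
    (hmono : ∀ y₁ y₂ : ℝ, x ≤ y₁ → y₁ ≤ y₂ →
      f y₂ * Real.exp (-(c * (y₂ - x))) ≤ f y₁ * Real.exp (-(c * (y₁ - x)))) :
    conv (triKernelH' h) f (x + h) ≤ c * conv (triKernelH h) f (x + h) := by
  obtain ⟨z, hz⟩ : ∃ z, z = x + h := ⟨_, rfl⟩
  obtain ⟨b, hb⟩ : ∃ b, b = x + 2*h := ⟨_, rfl⟩
  rw [← hz]
  have hxz : x ≤ z := by rw [hz]; linarith
  have hzb : z ≤ b := by rw [hz, hb]; linarith
  have hzh1 : z - h = x := by rw [hz]; ring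
  have hzh2 : z + h = b := by rw [hz, hb]; ring
  -- continuous auxiliary functions
  obtain ⟨g, hg⟩ : ∃ F : ℝ → ℝ, F = fun y => f y * Real.exp (-(c * (y - x))) := ⟨_, rfl⟩
  obtain ⟨D₁, hD₁⟩ : ∃ F : ℝ → ℝ, F = fun y => (1 + c*(y-x)) * Real.exp (c*(y-x)) := ⟨_, rfl⟩
  obtain ⟨D₂, hD₂⟩ : ∃ F : ℝ → ℝ, F = fun y => (-1 + c*(b-y)) * Real.exp (c*(y-x)) := ⟨_, rfl⟩
  obtain ⟨Q₁, hQ₁⟩ : ∃ F : ℝ → ℝ, F = fun y => (c*(y-x) + 1) * f y := ⟨_, rfl⟩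
  obtain ⟨Q₂, hQ₂⟩ : ∃ F : ℝ → ℝ, F = fun y => (c*(b-y) - 1) * f y := ⟨_, rfl⟩
  obtain ⟨G₁, hG₁⟩ : ∃ F : ℝ → ℝ, F = fun y => (y - x) * Real.exp (c*(y-x)) := ⟨_, rfl⟩
  obtain ⟨G₂, hG₂⟩ : ∃ F : ℝ → ℝ, F = fun y => (b - y) * Real.exp (c*(y-x)) := ⟨_, rfl⟩
  have hcD₁ : Continuous D₁ := by rw [hD₁]; fun_prop
  have hcD₂ : Continuous D₂ := by rw [hD₂]; fun_prop
  have hcQ₁ : Continuous Q₁ := by rw [hQ₁]; fun_prop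
  have hcQ₂ : Continuous Q₂ := by rw [hQ₂]; fun_prop
  -- rewriting the convolutions as sums of interval integrals
  have eqA : conv (triKernelH' h) f z
      = (∫ y in x..z, (-(1/h^2)) * f y) + ∫ y in z..b, (1/h^2) * f y := by
    rw [conv_triH'_eq h hh f z, hzh1, hzh2]
    have e1 : ∀ y ∈ Set.Ioo x z, (-Real.sign (z - y) / h ^ 2) * f y = (-(1/h^2)) * f y := by
      intro y hy
      rw [Real.sign_of_pos (by linarith [hy.2] : (0:ℝ) < z - y)]
      ring
    have e2 : ∀ y ∈ Set.Ioo z b, (-Real.sign (z - y) / h ^ 2) * f y = (1/h^2) * f y := by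
      intro y hy
      rw [Real.sign_of_neg (by linarith [hy.1] : z - y < 0)]
      ring
    have i1 : IntervalIntegrable (fun y => (-Real.sign (z - y) / h ^ 2) * f y) volume x z :=
      myIntervalIntegrable_congr_Ioo hxz e1
        ((by fun_prop : Continuous fun y => (-(1/h^2)) * f y).intervalIntegrable x z)
    have i2 : IntervalIntegrable (fun y => (-Real.sign (z - y) / h ^ 2) * f y) volume z b :=
      myIntervalIntegrable_congr_Ioo hzb e2
        ((by fun_prop : Continuous fun y => (1/h^2) * f y).intervalIntegrable z b)
    rw [← intervalIntegral.integral_add_adjacent_intervals i1 i2,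
      myIntervalIntegral_congr_Ioo hxz e1, myIntervalIntegral_congr_Ioo hzb e2]
  have eqB : conv (triKernelH h) f z
      = (∫ y in x..z, ((y-x)/h^2) * f y) + ∫ y in z..b, ((b-y)/h^2) * f y := by
    rw [conv_triH_eq h hh f z, hzh1, hzh2]
    have e1 : ∀ y ∈ Set.Ioo x z, (h⁻¹ * (1 - |z - y| / h)) * f y = ((y-x)/h^2) * f y := by
      intro y hy
      rw [abs_of_pos (by linarith [hy.2] : (0:ℝ) < z - y), hz]
      field_simp
      ring_nf
    have e2 : ∀ y ∈ Set.Ioo z b, (h⁻¹ * (1 - |z - y| / h)) * f y = ((b-y)/h^2) * f y := by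
      intro y hy
      rw [abs_of_neg (by linarith [hy.1] : z - y < 0), hz, hb]
      field_simp
      ring_nf
    have i1 : IntervalIntegrable (fun y => (h⁻¹ * (1 - |z - y| / h)) * f y) volume x z := by
      apply Continuous.intervalIntegrable
      have : Continuous fun y => |z - y| := (continuous_const.sub continuous_id).abs
      fun_prop
    have i2 : IntervalIntegrable (fun y => (h⁻¹ * (1 - |z - y| / h)) * f y) volume z b := by
      apply Continuous.intervalIntegrable
      have : Continuous fun y => |z - y| := (continuous_const.sub continuous_id).abs
      fun_prop
    rw [← intervalIntegral.integral_add_adjacent_intervals i1 i2,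
      myIntervalIntegral_congr_Ioo hxz e1, myIntervalIntegral_congr_Ioo hzb e2]
  -- pointwise identities
  have hE : ∀ y : ℝ, Real.exp (c*(y-x)) * Real.exp (-(c*(y-x))) = 1 := by
    intro y; rw [← Real.exp_add]; ring_nf; exact Real.exp_zero
  have hQD₁ : ∀ y, Q₁ y = D₁ y * g y := by
    intro y; simp only [hQ₁, hD₁, hg]
    linear_combination (-(1 + c*(y-x)) * f y) * hE y
  have hQD₂ : ∀ y, Q₂ y = D₂ y * g y := by
    intro y; simp only [hQ₂, hD₂, hg]
    linear_combination (-(-1 + c*(b-y)) * f y) * hE y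
  -- derivatives
  have hder₁ : ∀ y : ℝ, HasDerivAt G₁ (D₁ y) y := by
    intro y
    have h1 : HasDerivAt (fun w : ℝ => w - x) 1 y := (hasDerivAt_id y).sub_const x
    have h2 : HasDerivAt (fun w : ℝ => c*(w - x)) (c*1) y := h1.const_mul c
    have h3 : HasDerivAt (fun w : ℝ => Real.exp (c*(w-x))) (Real.exp (c*(y-x)) * (c*1)) y :=
      h2.exp
    have h4 : HasDerivAt (fun w => (w - x) * Real.exp (c*(w-x))) _ y := h1.mul h3
    rw [hG₁]
    convert h4 using 1
    simp only [hD₁]; ring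
  have hder₂ : ∀ y : ℝ, HasDerivAt G₂ (D₂ y) y := by
    intro y
    have h1 : HasDerivAt (fun w : ℝ => b - w) (-1) y := (hasDerivAt_id y).const_sub b
    have h2 : HasDerivAt (fun w : ℝ => c*(w - x)) (c*1) y :=
      ((hasDerivAt_id y).sub_const x).const_mul c
    have h3 : HasDerivAt (fun w : ℝ => Real.exp (c*(w-x))) (Real.exp (c*(y-x)) * (c*1)) y :=
      h2.exp
    have h4 : HasDerivAt (fun w => (b - w) * Real.exp (c*(w-x))) _ y := h1.mul h3
    rw [hG₂]
    convert h4 using 1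
    simp only [hD₂]; ring
  have ftc1 : ∫ y in x..z, D₁ y = G₁ z - G₁ x :=
    intervalIntegral.integral_eq_sub_of_hasDerivAt (fun t _ => hder₁ t)
      (hcD₁.intervalIntegrable x z)
  have ftc2 : ∫ y in z..b, D₂ y = G₂ b - G₂ z :=
    intervalIntegral.integral_eq_sub_of_hasDerivAt (fun t _ => hder₂ t)
      (hcD₂.intervalIntegrable z b)
  -- antitonicity of g
  have hg_anti : ∀ a b' : ℝ, x ≤ a → a ≤ b' → g b' ≤ g a := by
    intro a b' h1 h2; simp only [hg]; exact hmono a b' h1 h2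
  -- the sign-change point
  obtain ⟨m, hxm, hmb, hc1, hc2⟩ : ∃ m, x ≤ m ∧ m ≤ b ∧
      (∀ y, x ≤ y → y ≤ z → 0 ≤ (g y - g m) * D₁ y) ∧
      (∀ y, z ≤ y → y ≤ b → 0 ≤ (g y - g m) * D₂ y) := by
    rcases lt_trichotomy c 0 with hcneg | hc0 | hcpos
    · have h1c : 1/c < 0 := one_div_neg.mpr hcneg
      have hci : c * (1/c) = 1 := mul_one_div_cancel (ne_of_lt hcneg)
      refine ⟨min z (x - 1/c), le_min hxz (by linarith), min_le_of_left_le hzb, ?_, ?_⟩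
      · intro y hy1 hy2
        by_cases hyc : y ≤ x - 1/c
        · have hD : 0 ≤ 1 + c*(y-x) := by
            have h6 : c * (-(1/c)) ≤ c * (y-x) :=
              mul_le_mul_of_nonpos_left (by linarith) hcneg.le
            have h7 : c * (-(1/c)) = -1 := by rw [mul_neg, hci]
            linarith
          have hgy : g (min z (x - 1/c)) ≤ g y := hg_anti y _ hy1 (le_min hy2 hyc)
          simp only [hD₁]
          exact prod_sign₁ (sub_nonneg.mpr hgy) hD (Real.exp_pos _).le
        · push_neg at hyc
          have hD : 1 + c*(y-x) ≤ 0 := by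
            have h6 : c * (y-x) ≤ c * (-(1/c)) :=
              mul_le_mul_of_nonpos_left (by linarith) hcneg.le
            have h7 : c * (-(1/c)) = -1 := by rw [mul_neg, hci]
            linarith
          have hgy : g y ≤ g (min z (x - 1/c)) :=
            hg_anti _ y (le_min hxz (by linarith)) (le_trans (min_le_right _ _) hyc.le)
          simp only [hD₁]
          exact prod_sign₂ (sub_nonpos.mpr hgy) hD (Real.exp_pos _).le
      · intro y hy1 hy2
        have hD : -1 + c*(b-y) ≤ 0 := by nlinarith [mul_nonpos_iff.mpr (Or.inr ⟨hcneg.le, sub_nonneg.mpr hy2⟩)]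
        have hgy : g y ≤ g (min z (x - 1/c)) :=
          hg_anti _ y (le_min hxz (by linarith)) (le_trans (min_le_left _ _) hy1)
        simp only [hD₂]
        exact prod_sign₂ (sub_nonpos.mpr hgy) hD (Real.exp_pos _).le
    · refine ⟨z, hxz, hzb, ?_, ?_⟩
      · intro y hy1 hy2
        have hgy : g z ≤ g y := hg_anti y z hy1 hy2
        simp only [hD₁, hc0]
        exact prod_sign₁ (sub_nonneg.mpr hgy) (by norm_num) (Real.exp_pos _).le
      · intro y hy1 hy2
        have hgy : g y ≤ g z := hg_anti z y hxz hy1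
        simp only [hD₂, hc0]
        exact prod_sign₂ (sub_nonpos.mpr hgy) (by norm_num) (Real.exp_pos _).le
    · have h1c : 0 < 1/c := one_div_pos.mpr hcpos
      have hci : c * (1/c) = 1 := mul_one_div_cancel (ne_of_gt hcpos)
      refine ⟨max z (b - 1/c), le_trans hxz (le_max_left _ _), max_le hzb (by linarith), ?_, ?_⟩
      · intro y hy1 hy2
        have hD : 0 ≤ 1 + c*(y-x) := by nlinarith [mul_nonneg hcpos.le (sub_nonneg.mpr hy1)]
        have hgy : g (max z (b - 1/c)) ≤ g y :=
          hg_anti y _ hy1 (le_trans hy2 (le_max_left _ _))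
        simp only [hD₁]
        exact prod_sign₁ (sub_nonneg.mpr hgy) hD (Real.exp_pos _).le
      · intro y hy1 hy2
        by_cases hyc : y ≤ b - 1/c
        · have hD : 0 ≤ -1 + c*(b-y) := by
            have h6 : c * (1/c) ≤ c * (b-y) :=
              mul_le_mul_of_nonneg_left (by linarith) hcpos.le
            linarith
          have hgy : g (max z (b - 1/c)) ≤ g y :=
            hg_anti y _ (le_trans hxz hy1) (le_trans hyc (le_max_right _ _))
          simp only [hD₂]
          exact prod_sign₁ (sub_nonneg.mpr hgy) hD (Real.exp_pos _).le
        · push_neg at hyc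
          have hD : -1 + c*(b-y) ≤ 0 := by
            have h6 : c * (b-y) ≤ c * (1/c) :=
              mul_le_mul_of_nonneg_left (by linarith) hcpos.le
            linarith
          have hgy : g y ≤ g (max z (b - 1/c)) :=
            hg_anti _ y (le_trans hxz (le_max_left _ _)) (max_le hy1 hyc.le)
          simp only [hD₂]
          exact prod_sign₂ (sub_nonpos.mpr hgy) hD (Real.exp_pos _).le
  -- key integral bounds
  have hcg : Continuous g := by rw [hg]; fun_prop
  have key1 : g m * (G₁ z - G₁ x) ≤ ∫ y in x..z, Q₁ y := by
    have h0 : 0 ≤ ∫ y in x..z, ((g y - g m) * D₁ y) :=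
      intervalIntegral.integral_nonneg hxz (fun u hu => hc1 u hu.1 hu.2)
    have hrw : (∫ y in x..z, ((g y - g m) * D₁ y))
        = (∫ y in x..z, Q₁ y) - g m * ∫ y in x..z, D₁ y := by
      rw [← intervalIntegral.integral_const_mul,
        ← intervalIntegral.integral_sub (hcQ₁.intervalIntegrable x z)
          (Continuous.intervalIntegrable (u := fun y => g m * D₁ y) (continuous_const.mul hcD₁) x z)]
      apply intervalIntegral.integral_congr
      intro u _
      simp only
      rw [hQD₁ u]; ring
    rw [hrw, ftc1] at h0; linarith
  have key2 : g m * (G₂ b - G₂ z) ≤ ∫ y in z..b, Q₂ y := by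
    have h0 : 0 ≤ ∫ y in z..b, ((g y - g m) * D₂ y) :=
      intervalIntegral.integral_nonneg hzb (fun u hu => hc2 u hu.1 hu.2)
    have hrw : (∫ y in z..b, ((g y - g m) * D₂ y))
        = (∫ y in z..b, Q₂ y) - g m * ∫ y in z..b, D₂ y := by
      rw [← intervalIntegral.integral_const_mul,
        ← intervalIntegral.integral_sub (hcQ₂.intervalIntegrable z b)
          (Continuous.intervalIntegrable (u := fun y => g m * D₂ y) (continuous_const.mul hcD₂) z b)]
      apply intervalIntegral.integral_congr
      intro u _
      simp only
      rw [hQD₂ u]; ring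
    rw [hrw, ftc2] at h0; linarith
  have hGsum : (G₁ z - G₁ x) + (G₂ b - G₂ z) = 0 := by
    simp only [hG₁, hG₂]
    rw [show z - x = h by rw [hz]; ring, show b - z = h by rw [hb, hz]; ring]
    ring
  have hQsum : 0 ≤ (∫ y in x..z, Q₁ y) + ∫ y in z..b, Q₂ y := by
    have : g m * (G₁ z - G₁ x) + g m * (G₂ b - G₂ z) = 0 := by
      rw [← mul_add, hGsum, mul_zero]
    linarith
  -- final algebra
  rw [eqA, eqB]
  have t1 : c * (∫ y in x..z, ((y-x)/h^2) * f y) - (∫ y in x..z, (-(1/h^2)) * f y)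
      = (1/h^2) * ∫ y in x..z, Q₁ y := by
    rw [← intervalIntegral.integral_const_mul, ← intervalIntegral.integral_const_mul,
      ← intervalIntegral.integral_sub
        ((by fun_prop : Continuous fun y => c * (((y-x)/h^2) * f y)).intervalIntegrable x z)
        ((by fun_prop : Continuous fun y => (-(1/h^2)) * f y).intervalIntegrable x z)]
    apply intervalIntegral.integral_congr
    intro u _
    simp only [hQ₁]
    ring
  have t2 : c * (∫ y in z..b, ((b-y)/h^2) * f y) - (∫ y in z..b, (1/h^2) * f y)
      = (1/h^2) * ∫ y in z..b, Q₂ y := by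
    rw [← intervalIntegral.integral_const_mul, ← intervalIntegral.integral_const_mul,
      ← intervalIntegral.integral_sub
        ((by fun_prop : Continuous fun y => c * (((b-y)/h^2) * f y)).intervalIntegrable z b)
        ((by fun_prop : Continuous fun y => (1/h^2) * f y).intervalIntegrable z b)]
    apply intervalIntegral.integral_congr
    intro u _
    simp only [hQ₂]
    ring
  have hpos : (0:ℝ) < 1/h^2 := by positivity
  have hsum2 : 0 ≤ 1/h^2 * ((∫ y in x..z, Q₁ y) + ∫ y in z..b, Q₂ y) :=
    mul_nonneg hpos.le hQsum
  rw [mul_add] at hsum2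
  linarith


lemma triKernelH'_odd (h v : ℝ) : triKernelH' h (-v) = -triKernelH' h v := by
  unfold triKernelH'
  rw [abs_neg, Real.sign_neg]
  split_ifs with h1
  · ring
  · ring

lemma triKernelH_even (h v : ℝ) : triKernelH h (-v) = triKernelH h v := by
  unfold triKernelH triKernel
  rw [neg_div, abs_neg]

lemma conv_triH'_reflect (h x : ℝ) (f : ℝ → ℝ) :
    conv (triKernelH' h) (fun y => f (2*x - y)) (x + h)
      = -conv (triKernelH' h) f (x - h) := by
  unfold conv
  have e1 : (fun y => triKernelH' h (x + h - y) * f (2*x - y))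
      = fun y => (fun u => triKernelH' h (u - (x - h)) * f u) (2*x - y) := by
    funext y
    simp only
    congr 2
    ring
  rw [e1, integral_sub_left_eq_self (fun u => triKernelH' h (u - (x - h)) * f u) volume (2*x)]
  rw [← integral_neg]
  congr 1
  funext u
  rw [show x - h - u = -(u - (x - h)) by ring, triKernelH'_odd]
  ring

lemma conv_triH_reflect (h x : ℝ) (f : ℝ → ℝ) :
    conv (triKernelH h) (fun y => f (2*x - y)) (x + h)
      = conv (triKernelH h) f (x - h) := by
  unfold conv
  have e1 : (fun y => triKernelH h (x + h - y) * f (2*x - y))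
      = fun y => (fun u => triKernelH h (u - (x - h)) * f u) (2*x - y) := by
    funext y
    simp only
    congr 2
    ring
  rw [e1, integral_sub_left_eq_self (fun u => triKernelH h (u - (x - h)) * f u) volume (2*x)]
  congr 1
  funext u
  rw [show x - h - u = -(u - (x - h)) by ring, triKernelH_even]

lemma core' (h c x : ℝ) (hh : 0 < h) (f : ℝ → ℝ) (hf : Continuous f) (hf0 : ∀ y, 0 ≤ f y)
    (hmono : ∀ y₁ y₂ : ℝ, y₁ ≤ y₂ → y₂ ≤ x →
      f y₁ * Real.exp (-(c * (y₁ - x))) ≤ f y₂ * Real.exp (-(c * (y₂ - x)))) :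
    c * conv (triKernelH h) f (x - h) ≤ conv (triKernelH' h) f (x - h) := by
  have hrefl := core h (-c) x hh (fun y => f (2*x - y))
    (hf.comp (continuous_const.sub continuous_id)) (fun y => hf0 _) ?_
  · rw [conv_triH'_reflect, conv_triH_reflect] at hrefl
    linarith
  · intro y₁ y₂ h1 h2
    have := hmono (2*x - y₂) (2*x - y₁) (by linarith) (by linarith)
    rw [show -(-c * (y₂ - x)) = -(c * (2*x - y₂ - x)) by ring,
      show -(-c * (y₁ - x)) = -(c * (2*x - y₁ - x)) by ring]
    exact this


lemma pos_near (f : ℝ → ℝ) (hcont : Continuous f) (u : ℝ) (hu : 0 < f u) :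
    ∃ w₁ w₂, w₁ < u ∧ u < w₂ ∧ 0 < f w₁ ∧ 0 < f w₂ := by
  have hopen : IsOpen {y : ℝ | 0 < f y} := isOpen_lt continuous_const hcont
  obtain ⟨ε, hε, hball⟩ := Metric.isOpen_iff.mp hopen u hu
  refine ⟨u - ε/2, u + ε/2, by linarith, by linarith, ?_, ?_⟩
  · apply hball
    rw [Metric.mem_ball, Real.dist_eq, show u - ε/2 - u = -(ε/2) by ring, abs_neg,
      abs_of_pos (by linarith)]
    linarith
  · apply hball
    rw [Metric.mem_ball, Real.dist_eq, show u + ε/2 - u = ε/2 by ring, abs_of_pos (by linarith)]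
    linarith

lemma score_ne_top (f₀ : ℝ → ℝ) (hcont : Continuous f₀) (hf_int : Integrable f₀ volume)
    (hiv : ∀ u v w : ℝ, 0 < f₀ u → 0 < f₀ w → u ≤ v → v ≤ w → 0 < f₀ v)
    (ψ₀ : ℝ → EReal) (hanti : Antitone ψ₀)
    (hscore : ∀ x y : ℝ, 0 < f₀ x → 0 < f₀ y →
      ∫ t in x..y, (ψ₀ t).toReal = Real.log (f₀ y) - Real.log (f₀ x))
    (t u : ℝ) (hu : 0 < f₀ u) (hut : u < t) : ψ₀ t ≠ ⊤ := by
  intro htop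
  have hψtop : ∀ s, s ≤ t → (ψ₀ s).toReal = 0 := by
    intro s hs
    have : ψ₀ s = ⊤ := top_le_iff.mp (htop ▸ hanti hs)
    rw [this]; rfl
  have hconst : ∀ v, 0 < f₀ v → v ≤ u → f₀ v = f₀ u := by
    intro v hv hvu
    have h0 : ∫ s in v..u, (ψ₀ s).toReal = 0 := by
      have : Set.EqOn (fun s => (ψ₀ s).toReal) (fun _ => (0:ℝ)) (Set.uIcc v u) := by
        intro s hs
        rw [Set.uIcc_of_le hvu] at hs
        exact hψtop s (by linarith [hs.2])
      rw [intervalIntegral.integral_congr this, intervalIntegral.integral_const]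
      simp
    have hsc := hscore v u hv hu
    rw [h0] at hsc
    have : Real.log (f₀ v) = Real.log (f₀ u) := by linarith
    calc f₀ v = Real.exp (Real.log (f₀ v)) := (Real.exp_log hv).symm
    _ = Real.exp (Real.log (f₀ u)) := by rw [this]
    _ = f₀ u := Real.exp_log hu
  by_cases hbdd : BddBelow {v | v ≤ u ∧ 0 < f₀ v}
  · set P := {v | v ≤ u ∧ 0 < f₀ v} with hP
    have hne : P.Nonempty := ⟨u, le_refl u, hu⟩
    set α := sInf P with hα
    obtain ⟨w, w₂, hw, _, hwpos, _⟩ := pos_near f₀ hcont u hu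
    have hwP : w ∈ P := ⟨hw.le, hwpos⟩
    have hαlt : α < u := lt_of_le_of_lt (csInf_le hbdd hwP) hw
    have hIoo : ∀ y ∈ Set.Ioo α u, f₀ y = f₀ u := by
      intro y hy
      obtain ⟨v, hvP, hvy⟩ := exists_lt_of_csInf_lt hne hy.1
      have hypos : 0 < f₀ y := hiv v y u hvP.2 hu hvy.le hy.2.le
      exact hconst y hypos hy.2.le
    have hfα : f₀ α = f₀ u := by
      have h1 : Filter.Tendsto f₀ (nhdsWithin α (Set.Ioi α)) (nhds (f₀ α)) :=
        (hcont.continuousAt).continuousWithinAt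
      have h2 : Filter.Tendsto f₀ (nhdsWithin α (Set.Ioi α)) (nhds (f₀ u)) := by
        apply Filter.Tendsto.congr' _ tendsto_const_nhds
        filter_upwards [Ioo_mem_nhdsGT_of_mem (Set.left_mem_Ico.mpr hαlt)] with y hy
        exact (hIoo y hy).symm
      exact tendsto_nhds_unique h1 h2
    have hαpos : 0 < f₀ α := hfα ▸ hu
    obtain ⟨w', _, hw'α, _, hw'pos, _⟩ := pos_near f₀ hcont α hαpos
    have : α ≤ w' := csInf_le hbdd ⟨by linarith, hw'pos⟩
    linarith
  · have hall : ∀ w, w ≤ u → f₀ w = f₀ u := by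
      intro w hw
      obtain ⟨v, hvP, hvw⟩ := not_bddBelow_iff.mp hbdd w
      have : 0 < f₀ w := hiv v w u hvP.2 hu hvw.le hw
      exact hconst w this hw
    have hIO : IntegrableOn f₀ (Set.Iic u) volume := hf_int.integrableOn
    have hIC : IntegrableOn (fun _ => f₀ u) (Set.Iic u) volume :=
      hIO.congr_fun (fun y hy => hall y hy) measurableSet_Iic
    rw [integrableOn_const_iff] at hIC
    rcases hIC with hc | hvol
    · exact absurd hc (by simp [hu.ne'])
    · rw [Real.volume_Iic] at hvol
      exact absurd hvol (by simp)

lemma score_ne_bot (f₀ : ℝ → ℝ) (hcont : Continuous f₀) (hf_int : Integrable f₀ volume)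
    (hiv : ∀ u v w : ℝ, 0 < f₀ u → 0 < f₀ w → u ≤ v → v ≤ w → 0 < f₀ v)
    (ψ₀ : ℝ → EReal) (hanti : Antitone ψ₀)
    (hscore : ∀ x y : ℝ, 0 < f₀ x → 0 < f₀ y →
      ∫ t in x..y, (ψ₀ t).toReal = Real.log (f₀ y) - Real.log (f₀ x))
    (t u : ℝ) (hu : 0 < f₀ u) (htu : t < u) : ψ₀ t ≠ ⊥ := by
  intro hbot
  have hψbot : ∀ s, t ≤ s → (ψ₀ s).toReal = 0 := by
    intro s hs
    have : ψ₀ s = ⊥ := le_bot_iff.mp (hbot ▸ hanti hs)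
    rw [this]; rfl
  have hconst : ∀ v, 0 < f₀ v → u ≤ v → f₀ v = f₀ u := by
    intro v hv hvu
    have h0 : ∫ s in u..v, (ψ₀ s).toReal = 0 := by
      have : Set.EqOn (fun s => (ψ₀ s).toReal) (fun _ => (0:ℝ)) (Set.uIcc u v) := by
        intro s hs
        rw [Set.uIcc_of_le hvu] at hs
        exact hψbot s (by linarith [hs.1])
      rw [intervalIntegral.integral_congr this, intervalIntegral.integral_const]
      simp
    have hsc := hscore u v hu hv
    rw [h0] at hsc
    have : Real.log (f₀ v) = Real.log (f₀ u) := by linarith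
    calc f₀ v = Real.exp (Real.log (f₀ v)) := (Real.exp_log hv).symm
    _ = Real.exp (Real.log (f₀ u)) := by rw [this]
    _ = f₀ u := Real.exp_log hu
  by_cases hbdd : BddAbove {v | u ≤ v ∧ 0 < f₀ v}
  · set P := {v | u ≤ v ∧ 0 < f₀ v} with hP
    have hne : P.Nonempty := ⟨u, le_refl u, hu⟩
    set β := sSup P with hβ
    obtain ⟨w₁, w, _, hw, _, hwpos⟩ := pos_near f₀ hcont u hu
    have hwP : w ∈ P := ⟨hw.le, hwpos⟩
    have hβgt : u < β := lt_of_lt_of_le hw (le_csSup hbdd hwP)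
    have hIoo : ∀ y ∈ Set.Ioo u β, f₀ y = f₀ u := by
      intro y hy
      obtain ⟨v, hvP, hvy⟩ := exists_lt_of_lt_csSup hne hy.2
      have hypos : 0 < f₀ y := hiv u y v hu hvP.2 hy.1.le hvy.le
      exact hconst y hypos hy.1.le
    have hfβ : f₀ β = f₀ u := by
      have h1 : Filter.Tendsto f₀ (nhdsWithin β (Set.Iio β)) (nhds (f₀ β)) :=
        (hcont.continuousAt).continuousWithinAt
      have h2 : Filter.Tendsto f₀ (nhdsWithin β (Set.Iio β)) (nhds (f₀ u)) := by
        apply Filter.Tendsto.congr' _ tendsto_const_nhds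
        filter_upwards [Ioo_mem_nhdsLT_of_mem (Set.right_mem_Ioc.mpr hβgt)] with y hy
        exact (hIoo y hy).symm
      exact tendsto_nhds_unique h1 h2
    have hβpos : 0 < f₀ β := hfβ ▸ hu
    obtain ⟨_, w', _, hw'β, _, hw'pos⟩ := pos_near f₀ hcont β hβpos
    have : w' ≤ β := le_csSup hbdd ⟨by linarith, hw'pos⟩
    linarith
  · have hall : ∀ w, u ≤ w → f₀ w = f₀ u := by
      intro w hw
      obtain ⟨v, hvP, hvw⟩ := not_bddAbove_iff.mp hbdd w
      have : 0 < f₀ w := hiv u w v hu hvP.2 hw hvw.le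
      exact hconst w this hw
    have hIO : IntegrableOn f₀ (Set.Ici u) volume := hf_int.integrableOn
    have hIC : IntegrableOn (fun _ => f₀ u) (Set.Ici u) volume :=
      hIO.congr_fun (fun y hy => hall y hy) measurableSet_Ici
    rw [integrableOn_const_iff] at hIC
    rcases hIC with hc | hvol
    · exact absurd hc (by simp [hu.ne'])
    · rw [Real.volume_Ici] at hvol
      exact absurd hvol (by simp)


theorem smoothed_score_sandwich (f₀ : ℝ → ℝ) (hcont : Continuous f₀)
    (hf_nonneg : ∀ x, 0 ≤ f₀ x) (hf_int : Integrable f₀ volume) (hf_mass : ∫ x, f₀ x = 1)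
    (hlogconc : ∀ x y : ℝ, ∀ t ∈ Set.Icc (0:ℝ) 1,
      f₀ x ^ t * f₀ y ^ (1 - t) ≤ f₀ (t * x + (1 - t) * y))
    (ψ₀ : ℝ → EReal) (hanti : Antitone ψ₀)
    (hscore : ∀ x y : ℝ, 0 < f₀ x → 0 < f₀ y →
      ∫ t in x..y, (ψ₀ t).toReal = Real.log (f₀ y) - Real.log (f₀ x))
    (hψ₀_top : ∀ x : ℝ, (∀ y, 0 < f₀ y → x ≤ y) → ψ₀ x = ⊤)
    (hψ₀_bot : ∀ x : ℝ, (∀ y, 0 < f₀ y → y ≤ x) → ψ₀ x = ⊥)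
    (h : ℝ) (hh : 0 < h)
    (ψh : ℝ → EReal)
    (hψh_top : ∀ z : ℝ, (∀ y, 0 < f₀ y → z + h ≤ y) → ψh z = ⊤)
    (hψh_bot : ∀ z : ℝ, (∀ y, 0 < f₀ y → y ≤ z - h) → ψh z = ⊥)
    (hψh_val : ∀ z : ℝ, (∃ y, 0 < f₀ y ∧ y < z + h) → (∃ y, 0 < f₀ y ∧ z - h < y) →
      ψh z = ((conv (triKernelH' h) f₀ z / conv (triKernelH h) f₀ z : ℝ) : EReal)) :
    ∀ x : ℝ, ψh (x + h) ≤ ψ₀ x ∧ ψ₀ x ≤ ψh (x - h) := by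
  -- positivity set is an interval
  have hiv : ∀ u v w : ℝ, 0 < f₀ u → 0 < f₀ w → u ≤ v → v ≤ w → 0 < f₀ v := by
    intro u v w hu hw huv hvw
    rcases eq_or_lt_of_le huv with rfl | huv'
    · exact hu
    rcases eq_or_lt_of_le hvw with rfl | hvw'
    · exact hw
    have hwu : 0 < w - u := by linarith
    have ht0 : 0 < (w - v)/(w - u) := div_pos (by linarith) hwu
    have ht1 : (w - v)/(w - u) < 1 := by rw [div_lt_one hwu]; linarith
    have hlc := hlogconc u w ((w - v)/(w - u)) ⟨ht0.le, ht1.le⟩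
    have heq : (w - v)/(w - u) * u + (1 - (w - v)/(w - u)) * w = v := by
      field_simp
      ring
    rw [heq] at hlc
    calc (0:ℝ) < f₀ u ^ ((w - v)/(w - u)) * f₀ w ^ (1 - (w - v)/(w - u)) :=
          mul_pos (Real.rpow_pos_of_pos hu _) (Real.rpow_pos_of_pos hw _)
    _ ≤ f₀ v := hlc
  intro x
  constructor
  · -- ψh (x+h) ≤ ψ₀ x
    by_cases h1 : ∀ y, 0 < f₀ y → x ≤ y
    · rw [hψ₀_top x h1]; exact le_top
    · push_neg at h1
      obtain ⟨u, hu, hux⟩ := h1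
      by_cases h2 : ∀ y, 0 < f₀ y → y ≤ x
      · rw [hψh_bot (x+h) (fun y hy => by linarith [h2 y hy])]; exact bot_le
      · push_neg at h2
        obtain ⟨v, hv, hxv⟩ := h2
        have hx : 0 < f₀ x := hiv u x v hu hv hux.le hxv.le
        have hnetop : ψ₀ x ≠ ⊤ :=
          score_ne_top f₀ hcont hf_int hiv ψ₀ hanti hscore x u hu hux
        have hnebot : ψ₀ x ≠ ⊥ :=
          score_ne_bot f₀ hcont hf_int hiv ψ₀ hanti hscore x v hv hxv
        obtain ⟨c, hc⟩ : ∃ c : ℝ, c = (ψ₀ x).toReal := ⟨_, rfl⟩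
        have hψx : ψ₀ x = (c : EReal) := by
          rw [hc, EReal.coe_toReal hnetop hnebot]
        have hmono : ∀ y₁ y₂ : ℝ, x ≤ y₁ → y₁ ≤ y₂ →
            f₀ y₂ * Real.exp (-(c * (y₂ - x))) ≤ f₀ y₁ * Real.exp (-(c * (y₁ - x))) := by
          intro y₁ y₂ hxy₁ hy₁₂
          by_cases h2p : 0 < f₀ y₂
          · have h1p : 0 < f₀ y₁ := hiv x y₁ y₂ hx h2p hxy₁ hy₁₂
            rcases eq_or_lt_of_le hy₁₂ with rfl | hlt
            · exact le_refl _
            · have hne2 : ∀ t ∈ Set.Icc y₁ y₂, ψ₀ t ≠ ⊤ := fun t htm =>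
                score_ne_top f₀ hcont hf_int hiv ψ₀ hanti hscore t u hu
                  (by linarith [htm.1])
              have hne3 : ∀ t ∈ Set.Icc y₁ y₂, ψ₀ t ≠ ⊥ := by
                intro t htm
                obtain ⟨_, w₂, _, hw₂, _, hw₂pos⟩ := pos_near f₀ hcont y₂ h2p
                exact score_ne_bot f₀ hcont hf_int hiv ψ₀ hanti hscore t w₂ hw₂pos
                  (by linarith [htm.2])
              have hanti' : AntitoneOn (fun t => (ψ₀ t).toReal) (Set.uIcc y₁ y₂) := by
                rw [Set.uIcc_of_le hy₁₂]
                intro s hs t htm hst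
                exact EReal.toReal_le_toReal (hanti hst) (hne3 t htm) (hne2 s hs)
              have hint : IntervalIntegrable (fun t => (ψ₀ t).toReal) volume y₁ y₂ :=
                hanti'.intervalIntegrable
              have hbound : ∀ t ∈ Set.Icc y₁ y₂, (ψ₀ t).toReal ≤ c := by
                intro t htm
                rw [hc]
                exact EReal.toReal_le_toReal (hanti (le_trans hxy₁ htm.1))
                  (hne3 t htm) hnetop
              have hle : ∫ t in y₁..y₂, (ψ₀ t).toReal ≤ c * (y₂ - y₁) := by
                calc ∫ t in y₁..y₂, (ψ₀ t).toReal ≤ ∫ _t in y₁..y₂, c :=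
                      intervalIntegral.integral_mono_on hy₁₂ hint
                        intervalIntegrable_const hbound
                _ = c * (y₂ - y₁) := by
                      rw [intervalIntegral.integral_const, smul_eq_mul]; ring
              have hsc := hscore y₁ y₂ h1p h2p
              rw [← Real.exp_log h2p, ← Real.exp_log h1p, ← Real.exp_add, ← Real.exp_add]
              exact Real.exp_le_exp.mpr (by linarith)
          · have h20 : f₀ y₂ = 0 := le_antisymm (not_lt.mp h2p) (hf_nonneg y₂)
            rw [h20, zero_mul]
            exact mul_nonneg (hf_nonneg y₁) (Real.exp_pos _).le
        have hcore := core h c x hh f₀ hcont hf_nonneg hmono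
        have hψ := hψh_val (x+h) ⟨x, hx, by linarith⟩ ⟨v, hv, by linarith⟩
        have hBpos : 0 < conv (triKernelH h) f₀ (x+h) := by
          apply conv_triH_pos h hh f₀ hcont hf_nonneg (x+h) (min v (x+h))
            (by rcases le_total v (x+h) with hvh | hvh
                · rw [min_eq_left hvh]; linarith
                · rw [min_eq_right hvh]; linarith)
            (by linarith [min_le_right v (x+h)])
          exact hiv x (min v (x+h)) v hx hv (le_min hxv.le (by linarith)) (min_le_left _ _)
        rw [hψ, hψx]
        exact EReal.coe_le_coe_iff.mpr ((div_le_iff₀ hBpos).mpr hcore)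
  · -- ψ₀ x ≤ ψh (x-h)
    by_cases h1 : ∀ y, 0 < f₀ y → y ≤ x
    · rw [hψ₀_bot x h1]; exact bot_le
    · push_neg at h1
      obtain ⟨v, hv, hxv⟩ := h1
      by_cases h2 : ∀ y, 0 < f₀ y → x ≤ y
      · rw [hψh_top (x-h) (fun y hy => by linarith [h2 y hy])]; exact le_top
      · push_neg at h2
        obtain ⟨u, hu, hux⟩ := h2
        have hx : 0 < f₀ x := hiv u x v hu hv hux.le hxv.le
        have hnetop : ψ₀ x ≠ ⊤ :=
          score_ne_top f₀ hcont hf_int hiv ψ₀ hanti hscore x u hu hux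
        have hnebot : ψ₀ x ≠ ⊥ :=
          score_ne_bot f₀ hcont hf_int hiv ψ₀ hanti hscore x v hv hxv
        obtain ⟨c, hc⟩ : ∃ c : ℝ, c = (ψ₀ x).toReal := ⟨_, rfl⟩
        have hψx : ψ₀ x = (c : EReal) := by
          rw [hc, EReal.coe_toReal hnetop hnebot]
        have hmono' : ∀ y₁ y₂ : ℝ, y₁ ≤ y₂ → y₂ ≤ x →
            f₀ y₁ * Real.exp (-(c * (y₁ - x))) ≤ f₀ y₂ * Real.exp (-(c * (y₂ - x))) := by
          intro y₁ y₂ hy₁₂ hy₂x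
          by_cases h1p : 0 < f₀ y₁
          · have h2p : 0 < f₀ y₂ := hiv y₁ y₂ x h1p hx hy₁₂ hy₂x
            rcases eq_or_lt_of_le hy₁₂ with rfl | hlt
            · exact le_refl _
            · have hne2 : ∀ t ∈ Set.Icc y₁ y₂, ψ₀ t ≠ ⊤ := by
                intro t htm
                obtain ⟨w₁, _, hw₁, _, hw₁pos, _⟩ := pos_near f₀ hcont y₁ h1p
                exact score_ne_top f₀ hcont hf_int hiv ψ₀ hanti hscore t w₁ hw₁pos
                  (by linarith [htm.1])
              have hne3 : ∀ t ∈ Set.Icc y₁ y₂, ψ₀ t ≠ ⊥ := fun t htm =>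
                score_ne_bot f₀ hcont hf_int hiv ψ₀ hanti hscore t v hv
                  (by linarith [htm.2])
              have hanti' : AntitoneOn (fun t => (ψ₀ t).toReal) (Set.uIcc y₁ y₂) := by
                rw [Set.uIcc_of_le hy₁₂]
                intro s hs t htm hst
                exact EReal.toReal_le_toReal (hanti hst) (hne3 t htm) (hne2 s hs)
              have hint : IntervalIntegrable (fun t => (ψ₀ t).toReal) volume y₁ y₂ :=
                hanti'.intervalIntegrable
              have hbound : ∀ t ∈ Set.Icc y₁ y₂, c ≤ (ψ₀ t).toReal := by
                intro t htm
                rw [hc]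
                exact EReal.toReal_le_toReal (hanti (le_trans htm.2 hy₂x))
                  hnebot (hne2 t htm)
              have hge : c * (y₂ - y₁) ≤ ∫ t in y₁..y₂, (ψ₀ t).toReal := by
                calc c * (y₂ - y₁) = ∫ _t in y₁..y₂, c := by
                      rw [intervalIntegral.integral_const, smul_eq_mul]; ring
                _ ≤ ∫ t in y₁..y₂, (ψ₀ t).toReal :=
                      intervalIntegral.integral_mono_on hy₁₂
                        intervalIntegrable_const hint hbound
              have hsc := hscore y₁ y₂ h1p h2p
              rw [← Real.exp_log h2p, ← Real.exp_log h1p, ← Real.exp_add, ← Real.exp_add]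
              exact Real.exp_le_exp.mpr (by linarith)
          · have h10 : f₀ y₁ = 0 := le_antisymm (not_lt.mp h1p) (hf_nonneg y₁)
            rw [h10, zero_mul]
            exact mul_nonneg (hf_nonneg y₂) (Real.exp_pos _).le
        have hcore := core' h c x hh f₀ hcont hf_nonneg hmono'
        have hψ := hψh_val (x-h) ⟨u, hu, by linarith⟩ ⟨v, hv, by linarith⟩
        have hBpos : 0 < conv (triKernelH h) f₀ (x-h) := by
          apply conv_triH_pos h hh f₀ hcont hf_nonneg (x-h) (max u (x-h))
            (by linarith [le_max_right u (x-h)])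
            (by rcases le_total u (x-h) with huh | huh
                · rw [max_eq_right huh]; linarith
                · rw [max_eq_left huh]; linarith)
          exact hiv u (max u (x-h)) x hu hx (le_max_left _ _)
            (max_le hux.le (by linarith))
        rw [hψ, hψx]
        exact EReal.coe_le_coe_iff.mpr ((le_div_iff₀ hBpos).mpr hcore)
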